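/- Let k be an algebraically closed field of characteristic zero and let H \in k[X,Y] be a polynomial of prime total degree that is a weak variable in k[X,Y], i.e., there exists G \in k[X,Y] with J_{(X,Y)}(H,G) a nonzero constant. Then the degree form of H (the sum of its terms of top total degree) is a power of a linear form, up to a constant factor. -/

import Mathlib

open MvPolynomial Polynomial

namespace WVaux

variable {k : Type*} [Field k]

lemma fdeg (d : Fin 2 →₀ ℕ) : d.degree = d 0 + d 1 := by
  rw [Finsupp.degree_apply]
  rw [Finset.sum_subset (Finset.subset_univ d.support)]
  · exact Fin.sum_univ_two d
  · intro x _ hx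
    simpa using Finsupp.notMem_support_iff.mp hx

lemma fsum_eq_deg (d : Fin 2 →₀ ℕ) : (d.sum fun _ => (id : ℕ → ℕ)) = d.degree := by
  rw [Finsupp.degree, Finsupp.sum]; rfl

lemma fsum_eq_deg' (d : Fin 2 →₀ ℕ) : (d.sum fun _ e => e) = d.degree := by
  rw [Finsupp.degree_apply, Finsupp.sum]

lemma fin2_ext {d e : Fin 2 →₀ ℕ} (h0 : d 0 = e 0) (h1 : d 1 = e 1) : d = e := by
  ext i
  match i with
  | 0 => exact h0
  | 1 => exact h1

lemma deg_sub_single {d : Fin 2 →₀ ℕ} {i : Fin 2} (h : d i ≠ 0) :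
    (d - Finsupp.single i 1).degree + 1 = d.degree := by
  rw [fdeg, fdeg]
  simp only [Finsupp.tsub_apply, Finsupp.single_apply]
  fin_cases i <;> simp_all <;> omega

lemma sub_single_add {d : Fin 2 →₀ ℕ} {i : Fin 2} (h : d i ≠ 0) :
    (d - Finsupp.single i 1) + Finsupp.single i 1 = d := by
  apply fin2_ext <;>
  · simp only [Finsupp.add_apply, Finsupp.tsub_apply, Finsupp.single_apply]
    fin_cases i <;> simp_all <;> omega

lemma le_totalDegree' {P : MvPolynomial (Fin 2) k} {d : Fin 2 →₀ ℕ} (h : d ∈ P.support) :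
    d.degree ≤ P.totalDegree := by
  rw [← fsum_eq_deg']; exact le_totalDegree h

lemma totalDegree_pderiv_le (i : Fin 2) (P : MvPolynomial (Fin 2) k) :
    (pderiv i P).totalDegree ≤ P.totalDegree - 1 := by
  conv_lhs => rw [P.as_sum]
  rw [map_sum]
  refine (totalDegree_finset_sum _ _).trans (Finset.sup_le fun s hs => ?_)
  rw [pderiv_monomial]
  by_cases h : s i = 0
  · simp [h]
  · refine (totalDegree_monomial_le _ _).trans ?_
    rw [fsum_eq_deg]
    have h1 := deg_sub_single (i := i) (d := s) h
    have h2 : s.degree ≤ P.totalDegree := le_totalDegree' hs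
    omega

lemma comp_monomial (m : ℕ) (t : Fin 2 →₀ ℕ) (b : k) :
    homogeneousComponent m (monomial t b) = if t.degree = m then monomial t b else 0 := by
  by_cases ht : t.degree = m
  · rw [if_pos ht]
    ext d
    rw [coeff_homogeneousComponent]
    by_cases hd : d = t
    · subst hd; simp [ht]
    · simp [MvPolynomial.coeff_monomial, Ne.symm hd]
  · rw [if_neg ht]
    ext d
    rw [coeff_homogeneousComponent, MvPolynomial.coeff_zero]
    split_ifs with h1
    · by_cases hd : d = t
      · subst hd; exact absurd h1 ht
      · simp [MvPolynomial.coeff_monomial, Ne.symm hd]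
    · rfl

lemma comp_pderiv (i : Fin 2) {n : ℕ} (hn : 1 ≤ n) (P : MvPolynomial (Fin 2) k) :
    homogeneousComponent (n - 1) (pderiv i P) = pderiv i (homogeneousComponent n P) := by
  induction P using MvPolynomial.induction_on' with
  | add p q hp hq => simp [hp, hq]
  | monomial s a =>
    rw [pderiv_monomial, comp_monomial, comp_monomial]
    by_cases h : s i = 0
    · have : a * (s i : k) = 0 := by rw [h]; simp
      rw [this]
      split_ifs <;> simp [pderiv_monomial, h]
    · have hds := deg_sub_single (i := i) (d := s) h
      split_ifs with h1 h2 h2 <;> [rw [pderiv_monomial]; omega; omega; simp [pderiv_monomial]]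

section Part2
variable {k : Type*} [Field k]

lemma euler {F : MvPolynomial (Fin 2) k} {n : ℕ} (h : F.IsHomogeneous n) :
    X 0 * pderiv 0 F + X 1 * pderiv 1 F = (n : MvPolynomial (Fin 2) k) * F := by
  conv_lhs => rw [F.as_sum]
  conv_rhs => rw [F.as_sum]
  rw [map_sum, map_sum, Finset.mul_sum, Finset.mul_sum, Finset.mul_sum, ← Finset.sum_add_distrib]
  refine Finset.sum_congr rfl fun s hs => ?_
  have hdeg : s.degree = n := by
    have := h (MvPolynomial.mem_support_iff.mp hs)
    rw [Finsupp.degree_eq_weight_one]; exact this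
  have key : ∀ i : Fin 2, X i * pderiv i (monomial s (coeff s F))
      = monomial s (coeff s F * (s i : k)) := by
    intro i
    rw [pderiv_monomial]
    by_cases hi : s i = 0
    · simp [hi]
    · rw [MvPolynomial.X, mul_comm, MvPolynomial.monomial_mul, sub_single_add hi, mul_one]
  rw [key 0, key 1, ← map_add, ← mul_add, ← Nat.cast_add]
  rw [show s 0 + s 1 = n from (fdeg s) ▸ hdeg]
  rw [show ((n : MvPolynomial (Fin 2) k)) = MvPolynomial.C (n : k) from by push_cast; rfl]
  rw [MvPolynomial.C_mul_monomial, mul_comm]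

lemma pderiv_isHomogeneous {F : MvPolynomial (Fin 2) k} {n : ℕ} (h : F.IsHomogeneous n)
    (i : Fin 2) : (pderiv i F).IsHomogeneous (n - 1) := by
  rcases Nat.eq_zero_or_pos n with hn | hn
  · subst hn
    obtain ⟨r, rfl⟩ : ∃ r, F = MvPolynomial.C r := by
      have := h.totalDegree_le
      refine ⟨coeff 0 F, ?_⟩
      have h0 := MvPolynomial.sum_homogeneousComponent F
      rw [Nat.le_zero.mp this] at h0
      simpa using h0.symm
    simp only [MvPolynomial.pderiv_C]
    exact isHomogeneous_zero _ _ _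
  · have : F = homogeneousComponent n F := by
      rw [homogeneousComponent_of_mem ((mem_homogeneousSubmodule _ _).mpr h), if_pos rfl]
    rw [this, ← comp_pderiv i hn]
    exact homogeneousComponent_isHomogeneous _ _

lemma top_ne_zero {P : MvPolynomial (Fin 2) k} (h : P ≠ 0) :
    homogeneousComponent P.totalDegree P ≠ 0 := by
  obtain ⟨d, hd, hdd⟩ := Finset.exists_mem_eq_sup P.support
    (MvPolynomial.support_nonempty.mpr h) (fun s => s.sum fun _ e => e)
  intro hzero
  have : coeff d (homogeneousComponent P.totalDegree P) = 0 := by rw [hzero]; simp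
  rw [coeff_homogeneousComponent] at this
  rw [if_pos] at this
  · exact MvPolynomial.mem_support_iff.mp hd this
  · rw [← fsum_eq_deg', MvPolynomial.totalDegree, hdd]

lemma sub_top_lt {P : MvPolynomial (Fin 2) k} {a : ℕ} (h : P.totalDegree ≤ a) :
    (P - homogeneousComponent a P) = 0 ∨ (P - homogeneousComponent a P).totalDegree < a := by
  rcases Nat.eq_zero_or_pos a with ha | ha
  · left
    subst ha
    have : P = MvPolynomial.C (coeff 0 P) := by
      have h0 := MvPolynomial.sum_homogeneousComponent P
      rw [Nat.le_zero.mp h] at h0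
      simpa using h0.symm
    rw [homogeneousComponent_zero, ← this, sub_self]
  · by_cases h0 : P - homogeneousComponent a P = 0
    · left; exact h0
    right
    rw [MvPolynomial.totalDegree]
    rw [Finset.sup_lt_iff (by simpa using ha)]
    intro d hd
    rw [MvPolynomial.mem_support_iff, MvPolynomial.coeff_sub, coeff_homogeneousComponent] at hd
    rw [fsum_eq_deg']
    by_cases hda : d.degree = a
    · rw [if_pos hda, sub_self] at hd; exact absurd rfl hd
    · refine lt_of_le_of_ne ?_ hda
      rw [if_neg hda, sub_zero] at hd
      exact le_trans (le_totalDegree' (MvPolynomial.mem_support_iff.mpr hd)) h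

lemma comp_homog_self {P : MvPolynomial (Fin 2) k} {n : ℕ} (h : P.IsHomogeneous n) :
    homogeneousComponent n P = P := by
  rw [homogeneousComponent_of_mem ((mem_homogeneousSubmodule _ _).mpr h), if_pos rfl]

lemma top_mul {A B : MvPolynomial (Fin 2) k} {a b : ℕ}
    (ha : A.totalDegree ≤ a) (hb : B.totalDegree ≤ b) :
    homogeneousComponent (a + b) (A * B)
      = homogeneousComponent a A * homogeneousComponent b B := by
  set Aa := homogeneousComponent a A with hAa
  set Bb := homogeneousComponent b B with hBb
  have hAh : Aa.IsHomogeneous a := homogeneousComponent_isHomogeneous a A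
  have hBh : Bb.IsHomogeneous b := homogeneousComponent_isHomogeneous b B
  have expand : A * B = Aa * Bb + ((A - Aa) * Bb + Aa * (B - Bb) + (A - Aa) * (B - Bb)) := by
    ring
  rw [expand, map_add, comp_homog_self (hAh.mul hBh)]
  have hzero : ∀ {U V : MvPolynomial (Fin 2) k}, U.totalDegree ≤ a →
      (V = 0 ∨ V.totalDegree < b) → homogeneousComponent (a + b) (U * V) = 0 := by
    rintro U V hU (rfl | hV)
    · rw [mul_zero, map_zero]
    · apply homogeneousComponent_eq_zero
      calc (U * V).totalDegree ≤ U.totalDegree + V.totalDegree := totalDegree_mul U V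
        _ < a + b := by omega
  have hzero' : ∀ {U V : MvPolynomial (Fin 2) k}, (U = 0 ∨ U.totalDegree < a) →
      V.totalDegree ≤ b → homogeneousComponent (a + b) (U * V) = 0 := by
    rintro U V (rfl | hU) hV
    · rw [zero_mul, map_zero]
    · apply homogeneousComponent_eq_zero
      calc (U * V).totalDegree ≤ U.totalDegree + V.totalDegree := totalDegree_mul U V
        _ < a + b := by omega
  have h1 : homogeneousComponent (a + b) ((A - Aa) * Bb) = 0 :=
    hzero' (sub_top_lt ha) (hBh.totalDegree_le)
  have h2 : homogeneousComponent (a + b) (Aa * (B - Bb)) = 0 :=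
    hzero hAh.totalDegree_le (sub_top_lt hb)
  have h3 : homogeneousComponent (a + b) ((A - Aa) * (B - Bb)) = 0 := by
    rcases sub_top_lt ha with h0 | hlt
    · rw [h0, zero_mul, map_zero]
    · rcases sub_top_lt hb with h0 | hlt'
      · rw [h0, mul_zero, map_zero]
      · exact hzero' (Or.inr hlt) hlt'.le
  rw [map_add, map_add, h1, h2, h3]
  ring


lemma top_pow (P : MvPolynomial (Fin 2) k) (m : ℕ) :
    homogeneousComponent (P.totalDegree * m) (P ^ m)
      = (homogeneousComponent P.totalDegree P) ^ m := by
  induction m with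
  | zero => simp
  | succ m ih =>
    have h1 : (P ^ m).totalDegree ≤ P.totalDegree * m :=
      (totalDegree_pow P m).trans (le_of_eq (mul_comm _ _))
    rw [pow_succ, pow_succ, ← ih]
    rw [show P.totalDegree * (m + 1) = P.totalDegree * m + P.totalDegree from by ring]
    exact top_mul h1 le_rfl

lemma jac_top {H G : MvPolynomial (Fin 2) k} {p q : ℕ}
    (hHp : H.totalDegree = p) (hGq : G.totalDegree = q)
    (hp2 : 2 ≤ p) (hq1 : 1 ≤ q) {c : k}
    (hJ : pderiv 0 H * pderiv 1 G - pderiv 1 H * pderiv 0 G = MvPolynomial.C c) :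
    pderiv 0 (homogeneousComponent p H) * pderiv 1 (homogeneousComponent q G)
      - pderiv 1 (homogeneousComponent p H) * pderiv 0 (homogeneousComponent q G) = 0 := by
  have hN : 1 ≤ (p - 1) + (q - 1) := by omega
  have hcomp := congrArg (homogeneousComponent ((p - 1) + (q - 1))) hJ
  rw [map_sub] at hcomp
  have hbound : ∀ i : Fin 2, (pderiv i H).totalDegree ≤ p - 1 := fun i =>
    (totalDegree_pderiv_le i H).trans (by omega)
  have hbound' : ∀ i : Fin 2, (pderiv i G).totalDegree ≤ q - 1 := fun i =>
    (totalDegree_pderiv_le i G).trans (by omega)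
  rw [top_mul (hbound 0) (hbound' 1), top_mul (hbound 1) (hbound' 0)] at hcomp
  rw [comp_pderiv 0 (by omega) H, comp_pderiv 1 (by omega) H,
      comp_pderiv 0 (by omega) G, comp_pderiv 1 (by omega) G] at hcomp
  rw [hcomp]
  apply homogeneousComponent_eq_zero
  rw [totalDegree_C]
  omega

end Part2

section Phi
variable {k : Type*} [Field k]

/-- evaluation at `(t, 1)`. -/
noncomputable def phi : MvPolynomial (Fin 2) k →ₐ[k] Polynomial k :=
  MvPolynomial.aeval ![Polynomial.X, 1]

lemma phi_monomial (s : Fin 2 →₀ ℕ) (a : k) :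
    phi (MvPolynomial.monomial s a) = Polynomial.C a * Polynomial.X ^ (s 0) := by
  rw [phi, MvPolynomial.aeval_monomial]
  rw [Finsupp.prod_fintype _ _ (fun i => pow_zero _), Fin.prod_univ_two]
  simp [Polynomial.algebraMap_eq]

lemma phi_X0 : phi (MvPolynomial.X 0 : MvPolynomial (Fin 2) k) = Polynomial.X := by
  simp [phi]

lemma phi_X1 : phi (MvPolynomial.X 1 : MvPolynomial (Fin 2) k) = 1 := by
  simp [phi]

lemma phi_C (a : k) : phi (MvPolynomial.C a) = Polynomial.C a := by
  simp [phi, Polynomial.algebraMap_eq]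

lemma phi_pderiv (P : MvPolynomial (Fin 2) k) :
    phi (pderiv 0 P) = Polynomial.derivative (phi P) := by
  induction P using MvPolynomial.induction_on' with
  | add p q hp hq => simp [hp, hq]
  | monomial s a =>
    rw [pderiv_monomial, phi_monomial, phi_monomial]
    by_cases h : s 0 = 0
    · simp [h]
    · rw [Polynomial.derivative_C_mul, Polynomial.derivative_X_pow]
      have h0 : ((s - Finsupp.single 0 1 : Fin 2 →₀ ℕ)) 0 = s 0 - 1 := by
        rw [Finsupp.tsub_apply, Finsupp.single_apply]
        simp
      rw [h0, Polynomial.C_mul]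
      ring

lemma phi_coeff {F : MvPolynomial (Fin 2) k} {n : ℕ} (h : F.IsHomogeneous n)
    {d : Fin 2 →₀ ℕ} (hd : d ∈ F.support) :
    (phi F).coeff (d 0) = MvPolynomial.coeff d F := by
  conv_lhs => rw [F.as_sum, map_sum]
  rw [Polynomial.finset_sum_coeff]
  have hterm : ∀ s, (phi (MvPolynomial.monomial s (MvPolynomial.coeff s F))).coeff (d 0)
      = if d 0 = s 0 then MvPolynomial.coeff s F else 0 := by
    intro s
    rw [phi_monomial, Polynomial.coeff_C_mul, Polynomial.coeff_X_pow]
    split_ifs <;> simp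
  rw [Finset.sum_congr rfl (fun s _ => hterm s)]
  rw [Finset.sum_eq_single_of_mem d hd (fun s hs hne => ?_), if_pos rfl]
  rw [if_neg]
  intro h0
  apply hne
  have hds : d.degree = n := by
    have := h (MvPolynomial.mem_support_iff.mp hd)
    rw [Finsupp.degree_eq_weight_one]; exact this
  have hss : s.degree = n := by
    have := h (MvPolynomial.mem_support_iff.mp hs)
    rw [Finsupp.degree_eq_weight_one]; exact this
  rw [fdeg] at hds hss
  exact fin2_ext h0.symm (by omega)

lemma phi_ne_zero {F : MvPolynomial (Fin 2) k} {n : ℕ} (h : F.IsHomogeneous n)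
    (hF : F ≠ 0) : phi F ≠ 0 := by
  obtain ⟨d, hd⟩ := (MvPolynomial.support_nonempty.mpr hF).exists_mem
  intro h0
  have := phi_coeff h hd
  rw [h0, Polynomial.coeff_zero] at this
  exact MvPolynomial.mem_support_iff.mp hd this.symm

lemma phi_inj {F G : MvPolynomial (Fin 2) k} {n : ℕ} (hF : F.IsHomogeneous n)
    (hG : G.IsHomogeneous n) (h : phi F = phi G) : F = G := by
  by_contra hne
  have hsub : (F - G).IsHomogeneous n := hF.sub hG
  have : phi (F - G) ≠ 0 := phi_ne_zero hsub (sub_ne_zero_of_ne hne)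
  apply this
  rw [map_sub, h, sub_self]

lemma phi_natDegree_le {F : MvPolynomial (Fin 2) k} {n : ℕ} (h : F.IsHomogeneous n) :
    (phi F).natDegree ≤ n := by
  apply Polynomial.natDegree_le_iff_coeff_eq_zero.mpr
  intro j hj
  conv_lhs => rw [F.as_sum, map_sum]
  rw [Polynomial.finset_sum_coeff]
  apply Finset.sum_eq_zero
  intro s hs
  rw [phi_monomial, Polynomial.coeff_C_mul, Polynomial.coeff_X_pow, if_neg, mul_zero]
  have hss : s.degree = n := by
    have := h (MvPolynomial.mem_support_iff.mp hs)
    rw [Finsupp.degree_eq_weight_one]; exact this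
  rw [fdeg] at hss
  omega

end Phi

section OneVar
variable {k : Type*} [Field k] [CharZero k]

/-- If `U' V = U V'` for nonzero polynomials, then `U` is a constant multiple of `V`. -/
lemma const_ratio {U V : Polynomial k} (hU : U ≠ 0) (hV : V ≠ 0)
    (h : Polynomial.derivative U * V = U * Polynomial.derivative V) :
    ∃ μ : k, μ ≠ 0 ∧ U = Polynomial.C μ * V := by
  classical
  set d := GCDMonoid.gcd U V with hd
  have hd0 : d ≠ 0 := gcd_ne_zero_of_left hU
  set A := U / d with hA
  set B := V / d with hB
  have hUA : d * A = U := EuclideanDomain.mul_div_cancel' hd0 (gcd_dvd_left U V)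
  have hVB : d * B = V := EuclideanDomain.mul_div_cancel' hd0 (gcd_dvd_right U V)
  have hcop : IsCoprime A B := isCoprime_div_gcd_div_gcd hV
  have hA0 : A ≠ 0 := by intro h0; rw [h0, mul_zero] at hUA; exact hU hUA.symm
  have hB0 : B ≠ 0 := by intro h0; rw [h0, mul_zero] at hVB; exact hV hVB.symm
  have key : Polynomial.derivative A * B = A * Polynomial.derivative B := by
    have h2 : Polynomial.derivative (d * A) * (d * B)
        = (d * A) * Polynomial.derivative (d * B) := by rw [hUA, hVB]; exact h
    rw [Polynomial.derivative_mul, Polynomial.derivative_mul] at h2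
    have h3 : d * d * (Polynomial.derivative A * B) = d * d * (A * Polynomial.derivative B) := by
      linear_combination h2
    exact mul_left_cancel₀ (mul_ne_zero hd0 hd0) h3
  have hAd : A ∣ Polynomial.derivative A := by
    have h1 : A ∣ B * Polynomial.derivative A := ⟨Polynomial.derivative B, by linear_combination key⟩
    exact hcop.dvd_of_dvd_mul_left h1
  have hBd : B ∣ Polynomial.derivative B := by
    have h1 : B ∣ A * Polynomial.derivative B := ⟨Polynomial.derivative A, by linear_combination -key⟩
    exact hcop.symm.dvd_of_dvd_mul_left h1
  have hdvd_deg : ∀ {W : Polynomial k}, W ≠ 0 → W ∣ Polynomial.derivative W →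
      ∃ w : k, w ≠ 0 ∧ W = Polynomial.C w := by
    intro W hW hWd
    have hder : Polynomial.derivative W = 0 := by
      by_contra hne
      have h1 : W.natDegree ≤ (Polynomial.derivative W).natDegree :=
        Polynomial.natDegree_le_of_dvd hWd hne
      have h2 : (Polynomial.derivative W).natDegree < W.natDegree := by
        apply Polynomial.natDegree_derivative_lt
        intro h0
        rw [Polynomial.eq_C_of_natDegree_eq_zero h0] at hne
        simp at hne
      omega
    have h0 : W.natDegree = 0 := Polynomial.natDegree_eq_zero_of_derivative_eq_zero hder
    refine ⟨W.coeff 0, ?_, Polynomial.eq_C_of_natDegree_eq_zero h0⟩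
    intro hc
    rw [Polynomial.eq_C_of_natDegree_eq_zero h0, hc] at hW
    simp at hW
  obtain ⟨a, ha0, hAa⟩ := hdvd_deg hA0 hAd
  obtain ⟨b, hb0, hBb⟩ := hdvd_deg hB0 hBd
  refine ⟨a / b, div_ne_zero ha0 hb0, ?_⟩
  rw [← hUA, ← hVB, hAa, hBb]
  rw [show Polynomial.C (a/b) * (d * Polynomial.C b) = d * (Polynomial.C (a/b) * Polynomial.C b)
    from by ring, ← Polynomial.C_mul, div_mul_cancel₀ a hb0]

lemma power_prop {f g : Polynomial k} {p q : ℕ} (hp : 1 ≤ p) (hq : 1 ≤ q)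
    (hf : f ≠ 0) (hg : g ≠ 0)
    (h : (q : Polynomial k) * Polynomial.derivative f * g
        = (p : Polynomial k) * f * Polynomial.derivative g) :
    ∃ μ : k, μ ≠ 0 ∧ f ^ q = Polynomial.C μ * g ^ p := by
  have key : Polynomial.derivative (f ^ q) * (g ^ p)
      = (f ^ q) * Polynomial.derivative (g ^ p) := by
    rw [Polynomial.derivative_pow, Polynomial.derivative_pow]
    have e1 : f ^ q = f ^ (q - 1) * f := by rw [← pow_succ]; congr 1; omega
    have e2 : g ^ p = g ^ (p - 1) * g := by rw [← pow_succ]; congr 1; omega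
    calc (q : Polynomial k) * f ^ (q-1) * Polynomial.derivative f * g ^ p
        = (f ^ (q-1) * g ^ (p-1)) * ((q : Polynomial k) * Polynomial.derivative f * g) := by
          rw [e2]; ring
      _ = (f ^ (q-1) * g ^ (p-1)) * ((p : Polynomial k) * f * Polynomial.derivative g) := by
          rw [h]
      _ = f ^ q * ((p : Polynomial k) * g ^ (p-1) * Polynomial.derivative g) := by
          rw [e1]; ring
  exact const_ratio (pow_ne_zero q hf) (pow_ne_zero p hg) key

end OneVar

section Roots
variable {k : Type*} [Field k] [IsAlgClosed k]

lemma roots_card_eq (f : Polynomial k) : Multiset.card f.roots = f.natDegree := by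
  rcases eq_or_ne f 0 with rfl | hf
  · simp
  · exact Polynomial.splits_iff_card_roots.mp (IsAlgClosed.splits f)

/-- M2: if `f^q = μ g^p` with `p` prime not dividing `q` and `natDegree f ≤ p`,
then `f` is a constant times the `p`-th power of a linear polynomial. -/
lemma prime_case [DecidableEq k] {f g : Polynomial k} {p q : ℕ} (hp : p.Prime) (hnd : ¬ p ∣ q)
    (hq : 1 ≤ q) (hf : f ≠ 0) (hg : g ≠ 0) {μ : k} (hμ : μ ≠ 0)
    (heq : f ^ q = Polynomial.C μ * g ^ p) (hdeg : f.natDegree ≤ p) :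
    ∃ u a b : k, f = Polynomial.C u * (Polynomial.C a * Polynomial.X + Polynomial.C b) ^ p := by
  have hcop : Nat.Coprime p q := (Nat.Prime.coprime_iff_not_dvd hp).mpr hnd
  have hdeq : q * f.natDegree = p * g.natDegree := by
    have h1 : (f ^ q).natDegree = q * f.natDegree := Polynomial.natDegree_pow f q
    have h2 : (Polynomial.C μ * g ^ p).natDegree = p * g.natDegree := by
      rw [Polynomial.natDegree_C_mul hμ, Polynomial.natDegree_pow]
    rw [heq, h2] at h1
    omega
  have hpdvd : p ∣ f.natDegree := by
    refine hcop.dvd_of_dvd_mul_left ?_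
    exact ⟨g.natDegree, by linarith [hdeq]⟩
  rcases Nat.eq_zero_or_pos f.natDegree with h0 | hpos
  · exact ⟨f.coeff 0, 0, 1, by
      rw [Polynomial.eq_C_of_natDegree_eq_zero h0]; simp⟩
  · have hdf : f.natDegree = p := by
      obtain ⟨m, hm⟩ := hpdvd
      rcases Nat.eq_zero_or_pos m with rfl | hm1
      · omega
      · have : p ≤ f.natDegree := by
          rw [hm]; exact Nat.le_mul_of_pos_right p hm1
        omega
    -- roots of f
    have hcard : Multiset.card f.roots = p := by rw [roots_card_eq, hdf]
    have hroots_pow : (f ^ q).roots = q • f.roots := Polynomial.roots_pow f q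
    have hroots_rhs : (Polynomial.C μ * g ^ p).roots = p • g.roots := by
      rw [Polynomial.roots_C_mul _ hμ, Polynomial.roots_pow]
    obtain ⟨r, hr⟩ := Multiset.card_pos_iff_exists_mem.mp (by rw [hcard]; exact hp.pos)
    have hqp : q • f.roots = p • g.roots := by
      rw [← hroots_pow, ← hroots_rhs, heq]
    have hcount : q * f.roots.count r = p * g.roots.count r := by
      have := congrArg (Multiset.count r) hqp
      simpa [Multiset.count_nsmul] using this
    have hpdvd2 : p ∣ f.roots.count r := by
      refine hcop.dvd_of_dvd_mul_left ⟨g.roots.count r, by linarith [hcount]⟩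
    have h1le : 1 ≤ f.roots.count r := Multiset.one_le_count_iff_mem.mpr hr
    have hle : f.roots.count r ≤ p := hcard ▸ Multiset.count_le_card r f.roots
    have hcnt : f.roots.count r = p := by
      obtain ⟨m, hm⟩ := hpdvd2
      rcases Nat.eq_zero_or_pos m with rfl | hm1
      · omega
      · have : p ≤ f.roots.count r := by rw [hm]; exact Nat.le_mul_of_pos_right p hm1
        omega
    have hrep : f.roots = Multiset.replicate p r := by
      rw [Multiset.eq_replicate]
      refine ⟨hcard, fun b hb => ?_⟩
      have := Multiset.count_eq_card.mp (by rw [hcnt, hcard]) b hb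
      exact this.symm
    have hfact := Polynomial.C_leadingCoeff_mul_prod_multiset_X_sub_C (p := f)
      (by rw [hcard, hdf])
    rw [hrep, Multiset.map_replicate, Multiset.prod_replicate] at hfact
    refine ⟨f.leadingCoeff, 1, -r, ?_⟩
    have hlin : Polynomial.C (1:k) * Polynomial.X + Polynomial.C (-r)
        = Polynomial.X - Polynomial.C r := by
      rw [Polynomial.C_1, map_neg]; ring
    rw [hlin]
    exact hfact.symm

/-- M3: if `f^(p*m) = μ g^p`, then `g` is a constant multiple of `f^m`. -/
lemma divide_case [DecidableEq k] {f g : Polynomial k} {p m : ℕ} (hp : 1 ≤ p)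
    (hf : f ≠ 0) (hg : g ≠ 0) {μ : k} (hμ : μ ≠ 0)
    (heq : f ^ (p * m) = Polynomial.C μ * g ^ p) :
    ∃ lam : k, lam ≠ 0 ∧ g = Polynomial.C lam * f ^ m := by
  have heq2 : (f ^ m) ^ p = Polynomial.C μ * g ^ p := by rw [← pow_mul, mul_comm m p]; exact heq
  have hroots : p • (f ^ m).roots = p • g.roots := by
    have h1 : ((f ^ m) ^ p).roots = p • (f ^ m).roots := Polynomial.roots_pow _ _
    have h2 : (Polynomial.C μ * g ^ p).roots = p • g.roots := by
      rw [Polynomial.roots_C_mul _ hμ, Polynomial.roots_pow]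
    rw [← h1, ← h2, heq2]
  have hroots2 : (f ^ m).roots = g.roots := by
    ext a
    have := congrArg (Multiset.count a) hroots
    simp only [Multiset.count_nsmul] at this
    exact Nat.eq_of_mul_eq_mul_left (by omega) this
  have hfm : f ^ m ≠ 0 := pow_ne_zero m hf
  have hfact1 := Polynomial.C_leadingCoeff_mul_prod_multiset_X_sub_C (p := f ^ m)
    (roots_card_eq _)
  have hfact2 := Polynomial.C_leadingCoeff_mul_prod_multiset_X_sub_C (p := g)
    (roots_card_eq _)
  rw [hroots2] at hfact1
  set P := (Multiset.map (fun a => Polynomial.X - Polynomial.C a) g.roots).prod with hP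
  set L := (f ^ m).leadingCoeff with hL
  set lg := g.leadingCoeff with hlg
  have hL0 : L ≠ 0 := Polynomial.leadingCoeff_ne_zero.mpr hfm
  have hlg0 : lg ≠ 0 := Polynomial.leadingCoeff_ne_zero.mpr hg
  refine ⟨lg / L, div_ne_zero hlg0 hL0, ?_⟩
  rw [← hfact1, ← hfact2]
  rw [← mul_assoc, ← Polynomial.C_mul, div_mul_cancel₀ _ hL0]

end Roots

section Main
variable {k : Type*} [Field k] [IsAlgClosed k] [CharZero k]

lemma main_aux : ∀ (q : ℕ) (H G : MvPolynomial (Fin 2) k), G.totalDegree = q →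
    Nat.Prime H.totalDegree → ∀ c : k, c ≠ 0 →
    (pderiv 0 H * pderiv 1 G - pderiv 1 H * pderiv 0 G = MvPolynomial.C c) →
    ∃ u a b : k, homogeneousComponent H.totalDegree H
      = MvPolynomial.C u * (MvPolynomial.C a * MvPolynomial.X 0
          + MvPolynomial.C b * MvPolynomial.X 1) ^ H.totalDegree := by
  intro q
  induction q using Nat.strong_induction_on with
  | _ q IH =>
  intro H G hGq hp c hc hJ
  classical
  have hp2 : 2 ≤ H.totalDegree := hp.two_le
  set p := H.totalDegree with hpdef
  have hH0 : H ≠ 0 := by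
    intro h0
    rw [hpdef, h0, MvPolynomial.totalDegree_zero] at hp2
    omega
  have hq1 : 1 ≤ q := by
    by_contra hq0
    have ht : G.totalDegree = 0 := by omega
    have hGC : G = MvPolynomial.C (MvPolynomial.coeff 0 G) := by
      have h0 := MvPolynomial.sum_homogeneousComponent G
      rw [ht] at h0
      simpa using h0.symm
    rw [hGC] at hJ
    simp only [MvPolynomial.pderiv_C, mul_zero, sub_zero, zero_mul, sub_self] at hJ
    have h3 := congrArg (MvPolynomial.coeff 0) hJ
    simp at h3
    exact hc h3.symm
  have hG0 : G ≠ 0 := by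
    intro h0
    rw [h0, MvPolynomial.totalDegree_zero] at hGq
    omega
  set F := homogeneousComponent p H with hF
  set Γ := homogeneousComponent q G with hΓ
  have hFhom : F.IsHomogeneous p := homogeneousComponent_isHomogeneous p H
  have hΓhom : Γ.IsHomogeneous q := homogeneousComponent_isHomogeneous q G
  have hF0 : F ≠ 0 := by rw [hF, hpdef]; exact top_ne_zero hH0
  have hΓ0 : Γ ≠ 0 := by rw [hΓ, ← hGq]; exact top_ne_zero hG0
  have hjac : pderiv 0 F * pderiv 1 Γ - pderiv 1 F * pderiv 0 Γ = 0 :=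
    jac_top rfl hGq hp2 hq1 hJ
  set f := phi F with hfdef
  set g := phi Γ with hgdef
  have hf0 : f ≠ 0 := phi_ne_zero hFhom hF0
  have hg0 : g ≠ 0 := phi_ne_zero hΓhom hΓ0
  have hfd : phi (pderiv 0 F) = Polynomial.derivative f := phi_pderiv F
  have hgd : phi (pderiv 0 Γ) = Polynomial.derivative g := phi_pderiv Γ
  have heulF := congrArg phi (euler hFhom)
  have heulΓ := congrArg phi (euler hΓhom)
  rw [map_add, map_mul, map_mul, phi_X0, phi_X1, one_mul, map_mul, map_natCast phi] at heulF
  rw [map_add, map_mul, map_mul, phi_X0, phi_X1, one_mul, map_mul, map_natCast phi] at heulΓ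
  have hFY : phi (pderiv 1 F)
      = (p : Polynomial k) * f - Polynomial.X * Polynomial.derivative f := by
    linear_combination heulF - Polynomial.X * hfd
  have hΓY : phi (pderiv 1 Γ)
      = (q : Polynomial k) * g - Polynomial.X * Polynomial.derivative g := by
    linear_combination heulΓ - Polynomial.X * hgd
  have hjac2 := congrArg phi hjac
  rw [map_sub, map_mul, map_mul, map_zero, hfd, hgd, hFY, hΓY] at hjac2
  have hrel : (q : Polynomial k) * Polynomial.derivative f * g
      = (p : Polynomial k) * f * Polynomial.derivative g := by
    linear_combination hjac2
  obtain ⟨μ, hμ0, hμ⟩ := power_prop (by omega : 1 ≤ p) hq1 hf0 hg0 hrel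
  by_cases hdvd : p ∣ q
  · obtain ⟨m, hm⟩ := hdvd
    have hm1 : 1 ≤ m := by
      rcases Nat.eq_zero_or_pos m with rfl | h1
      · omega
      · exact h1
    rw [hm] at hμ
    obtain ⟨lam, hlam0, hlam⟩ := divide_case (by omega : 1 ≤ p) hf0 hg0 hμ0 hμ
    have hΓeq : Γ = MvPolynomial.C lam * F ^ m := by
      refine phi_inj hΓhom ?_ ?_
      · rw [hm]
        have := (hFhom.pow m).C_mul lam
        exact this
      · rw [map_mul, map_pow, phi_C]
        exact hlam
    set G' := G - MvPolynomial.C lam * H ^ m with hG'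
    have hJ' : pderiv 0 H * pderiv 1 G' - pderiv 1 H * pderiv 0 G'
        = MvPolynomial.C c := by
      have e : ∀ i : Fin 2, pderiv i G' = pderiv i G
          - MvPolynomial.C lam * ((m : MvPolynomial (Fin 2) k)
            * H ^ (m - 1) * pderiv i H) := by
        intro i
        rw [hG', map_sub, pderiv_C_mul, pderiv_pow]
      rw [e 0, e 1]
      linear_combination hJ
    have hG'0 : G' ≠ 0 := by
      intro h0
      rw [h0] at hJ'
      simp only [map_zero, mul_zero, sub_self, zero_mul, sub_zero] at hJ'
      have h3 := congrArg (MvPolynomial.coeff 0) hJ'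
      simp at h3
      exact hc h3.symm
    have htop' : homogeneousComponent q G' = 0 := by
      have hHm : homogeneousComponent q (H ^ m) = F ^ m := by
        rw [hm]
        exact top_pow H m
      rw [hG', map_sub, homogeneousComponent_C_mul, hHm, ← hΓ, hΓeq]
      ring
    have htotle : G'.totalDegree ≤ q := by
      have h1 : (MvPolynomial.C lam * H ^ m).totalDegree ≤ q := by
        refine (totalDegree_mul _ _).trans ?_
        rw [MvPolynomial.totalDegree_C, zero_add]
        refine (totalDegree_pow _ _).trans ?_
        rw [hm, ← hpdef]
        exact le_of_eq (mul_comm m p)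
      have h2 : (-(MvPolynomial.C lam * H ^ m)).totalDegree ≤ q := by
        rw [show -(MvPolynomial.C lam * H ^ m) = (-1 : k) • (MvPolynomial.C lam * H ^ m)
          from by rw [neg_one_smul]]
        exact (totalDegree_smul_le _ _).trans h1
      rw [hG', sub_eq_add_neg]
      exact (totalDegree_add _ _).trans (by rw [hGq] at *; exact max_le (le_refl q) h2)
    have htotlt : G'.totalDegree < q := by
      rcases lt_or_eq_of_le htotle with h | h
      · exact h
      · exfalso
        have := top_ne_zero hG'0
        rw [h, htop'] at this
        exact this rfl
    exact IH G'.totalDegree htotlt H G' rfl hp c hc hJ'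
  · have hfdeg : f.natDegree ≤ p := phi_natDegree_le hFhom
    obtain ⟨u, a, b, hu⟩ := prime_case hp hdvd hq1 hf0 hg0 hμ0 hμ hfdeg
    refine ⟨u, a, b, ?_⟩
    have hhomR : (MvPolynomial.C u * (MvPolynomial.C a * MvPolynomial.X 0
        + MvPolynomial.C b * MvPolynomial.X 1) ^ p :
          MvPolynomial (Fin 2) k).IsHomogeneous p := by
      have hlin : (MvPolynomial.C a * MvPolynomial.X 0
          + MvPolynomial.C b * MvPolynomial.X 1 :
            MvPolynomial (Fin 2) k).IsHomogeneous 1 :=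
        (isHomogeneous_C_mul_X a 0).add (isHomogeneous_C_mul_X b 1)
      have h2 := hlin.pow p
      rw [one_mul] at h2
      exact h2.C_mul u
    refine phi_inj hFhom hhomR ?_
    rw [map_mul, map_pow, map_add, map_mul, map_mul, phi_C, phi_C, phi_C,
      phi_X0, phi_X1, mul_one]
    exact hu

end Main
end WVaux


/-- if `H ∈ k[X,Y]` has prime total degree and is a weak variable (i.e.
`J(H,G)` is a nonzero constant for some `G`), then the degree form of `H` is, up to a
constant factor, a power of a linear form. -/
theorem weak_variable_prime_degree_form
    {k : Type*} [Field k] [IsAlgClosed k] [CharZero k]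
    (H G : MvPolynomial (Fin 2) k) (hp : Nat.Prime H.totalDegree)
    (c : k) (hc : c ≠ 0)
    (hJ : MvPolynomial.pderiv 0 H * MvPolynomial.pderiv 1 G
        - MvPolynomial.pderiv 1 H * MvPolynomial.pderiv 0 G = MvPolynomial.C c) :
    ∃ u a b : k,
      MvPolynomial.homogeneousComponent H.totalDegree H
        = MvPolynomial.C u
          * (MvPolynomial.C a * MvPolynomial.X 0
              + MvPolynomial.C b * MvPolynomial.X 1) ^ H.totalDegree := by
  exact WVaux.main_aux G.totalDegree H G rfl hp c hc hJ
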